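/- Let M ∈ ℝ^{m×n} be a rank-r μ-incoherent matrix with largest and smallest nonzero singular values Σmax ≥ Σmin > 0, and let β_T > 0. Suppose X ∈ ℝ^{m×r} and Y ∈ ℝ^{n×r} satisfy d := ‖M − X·Yᵀ‖_F ≤ Σmin/(10r), ‖X‖_F ≤ β_T and ‖Y‖_F ≤ β_T. Then there exist U ∈ ℝ^{m×r} and V ∈ ℝ^{n×r} such that: (i) U·Vᵀ = M; (ii) ‖U‖_F ≤ ‖X‖_F and moreover ‖U‖₂ ≤ ‖X‖₂ in spectral norm; (iii) ‖U − X‖_F ≤ (5/(4Σmin))·max{‖X‖₂, ‖Y‖₂}·d and ‖V − Y‖_F ≤ (2/Σmin)·max{‖X‖₂, ‖Y‖₂}·d; (iv) ‖U^{(i)}‖² ≤ (rμ/m)·β_T² for every row i and ‖V^{(j)}‖² ≤ (3rμ/(2n))·β_T² for every row j. -/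

import Mathlib

open Matrix
open scoped Classical

noncomputable section

/-- Frobenius norm of a real matrix. -/
def frob {m n : ℕ} (A : Matrix (Fin m) (Fin n) ℝ) : ℝ :=
  Real.sqrt (∑ i, ∑ j, A i j ^ 2)

/-- Euclidean norm of the `i`-th row of a matrix. -/
def rowNorm {m n : ℕ} (A : Matrix (Fin m) (Fin n) ℝ) (i : Fin m) : ℝ :=
  Real.sqrt (∑ j, A i j ^ 2)

/-- Frobenius inner product `⟨A,B⟩ = trace(AᵀB)`. -/
def finner {m n : ℕ} (A B : Matrix (Fin m) (Fin n) ℝ) : ℝ :=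
  ∑ i, ∑ j, A i j * B i j

/-- Projection onto the set of entries indexed by `Ω` (other entries are set to `0`). -/
def projOmega {m n : ℕ} (Ω : Finset (Fin m × Fin n)) (A : Matrix (Fin m) (Fin n) ℝ) :
    Matrix (Fin m) (Fin n) ℝ :=
  Matrix.of fun i j => if (i, j) ∈ Ω then A i j else 0

/-- `G₀(z) = (max{0, z-1})²`. -/
def G0 (z : ℝ) : ℝ := max 0 (z - 1) ^ 2

/-- `G₀′(z) = 2·max{0, z-1}`. -/
def G0' (z : ℝ) : ℝ := 2 * max 0 (z - 1)

/-- The matrix whose `i`-th row is the `i`-th row of `A` and whose other rows vanish. -/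
def rowMat {m n : ℕ} (A : Matrix (Fin m) (Fin n) ℝ) (i : Fin m) :
    Matrix (Fin m) (Fin n) ℝ :=
  Matrix.of fun i' j => if i' = i then A i j else 0

/-- The regularizer `G(X,Y)`. -/
def Greg {m n r : ℕ} (ρ β1 β2 βT : ℝ) (X : Matrix (Fin m) (Fin r) ℝ)
    (Y : Matrix (Fin n) (Fin r) ℝ) : ℝ :=
  ρ * ∑ i, G0 (3 * rowNorm X i ^ 2 / (2 * β1 ^ 2)) +
    ρ * ∑ j, G0 (3 * rowNorm Y j ^ 2 / (2 * β2 ^ 2)) +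
    ρ * G0 (3 * frob X ^ 2 / (2 * βT ^ 2)) +
    ρ * G0 (3 * frob Y ^ 2 / (2 * βT ^ 2))

/-- The regularized objective `F̃(X,Y)`. -/
def Ftilde {m n r : ℕ} (Ω : Finset (Fin m × Fin n)) (M : Matrix (Fin m) (Fin n) ℝ)
    (ρ β1 β2 βT : ℝ) (X : Matrix (Fin m) (Fin r) ℝ) (Y : Matrix (Fin n) (Fin r) ℝ) : ℝ :=
  (1 / 2) * frob (projOmega Ω (M - X * Yᵀ)) ^ 2 + Greg ρ β1 β2 βT X Y

/-- Gradient of the regularizer with respect to one of the factors. -/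
def gradG1 {m r : ℕ} (ρ β βT : ℝ) (X : Matrix (Fin m) (Fin r) ℝ) :
    Matrix (Fin m) (Fin r) ℝ :=
  (∑ i, (ρ * G0' (3 * rowNorm X i ^ 2 / (2 * β ^ 2)) * (3 / β ^ 2)) • rowMat X i) +
    (ρ * G0' (3 * frob X ^ 2 / (2 * βT ^ 2)) * (3 / βT ^ 2)) • X

/-- `∇_X F̃(X,Y)`. -/
def gradX {m n r : ℕ} (Ω : Finset (Fin m × Fin n)) (M : Matrix (Fin m) (Fin n) ℝ)
    (ρ β1 βT : ℝ) (X : Matrix (Fin m) (Fin r) ℝ) (Y : Matrix (Fin n) (Fin r) ℝ) :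
    Matrix (Fin m) (Fin r) ℝ :=
  projOmega Ω (X * Yᵀ - M) * Y + gradG1 ρ β1 βT X

/-- `∇_Y F̃(X,Y)`. -/
def gradY {m n r : ℕ} (Ω : Finset (Fin m × Fin n)) (M : Matrix (Fin m) (Fin n) ℝ)
    (ρ β2 βT : ℝ) (X : Matrix (Fin m) (Fin r) ℝ) (Y : Matrix (Fin n) (Fin r) ℝ) :
    Matrix (Fin n) (Fin r) ℝ :=
  (projOmega Ω (X * Yᵀ - M))ᵀ * X + gradG1 ρ β2 βT Y

/-- Membership in `K₁`. -/
def K1mem {m n r : ℕ} (β1 β2 : ℝ) (X : Matrix (Fin m) (Fin r) ℝ)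
    (Y : Matrix (Fin n) (Fin r) ℝ) : Prop :=
  (∀ i, rowNorm X i ≤ β1) ∧ ∀ j, rowNorm Y j ≤ β2

/-- Membership in `K₂`. -/
def K2mem {m n r : ℕ} (βT : ℝ) (X : Matrix (Fin m) (Fin r) ℝ)
    (Y : Matrix (Fin n) (Fin r) ℝ) : Prop :=
  frob X ≤ βT ∧ frob Y ≤ βT

/-- Membership in `K(t) = {(X,Y) : ‖M - XYᵀ‖_F ≤ t}`. -/
def Kmem {m n r : ℕ} (M : Matrix (Fin m) (Fin n) ℝ) (t : ℝ)
    (X : Matrix (Fin m) (Fin r) ℝ) (Y : Matrix (Fin n) (Fin r) ℝ) : Prop :=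
  frob (M - X * Yᵀ) ≤ t

/-- Spectral norm (largest singular value) of a real matrix, as the `ℓ²→ℓ²` operator norm. -/
def specNorm {m n : ℕ} (A : Matrix (Fin m) (Fin n) ℝ) : ℝ :=
  sSup {c : ℝ | ∃ x : Fin n → ℝ, (∑ j, x j ^ 2) ≤ 1 ∧
    c = Real.sqrt (∑ i, (∑ j, A i j * x j) ^ 2)}



def vnorm {n : ℕ} (x : Fin n → ℝ) : ℝ := Real.sqrt (∑ j, x j ^ 2)

lemma vnorm_nonneg {n : ℕ} (x : Fin n → ℝ) : 0 ≤ vnorm x := Real.sqrt_nonneg _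

lemma vnorm_sq {n : ℕ} (x : Fin n → ℝ) : vnorm x ^ 2 = ∑ j, x j ^ 2 :=
  Real.sq_sqrt (Finset.sum_nonneg fun _ _ => sq_nonneg _)

lemma vnorm_zero {n : ℕ} : vnorm (0 : Fin n → ℝ) = 0 := by
  simp [vnorm]

lemma vnorm_smul {n : ℕ} (c : ℝ) (x : Fin n → ℝ) : vnorm (c • x) = |c| * vnorm x := by
  unfold vnorm
  rw [← Real.sqrt_sq_eq_abs, ← Real.sqrt_mul (sq_nonneg c), Finset.mul_sum]
  congr 1
  exact Finset.sum_congr rfl fun j _ => by simp [Pi.smul_apply, smul_eq_mul]; ring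

lemma vnorm_dot_le {n : ℕ} (x y : Fin n → ℝ) : ∑ j, x j * y j ≤ vnorm x * vnorm y := by
  have h := Finset.sum_mul_sq_le_sq_mul_sq Finset.univ x y
  have h2 : (∑ j, x j * y j) ≤ |∑ j, x j * y j| := le_abs_self _
  refine h2.trans ?_
  rw [← Real.sqrt_sq_eq_abs]
  unfold vnorm
  rw [← Real.sqrt_mul (Finset.sum_nonneg fun _ _ => sq_nonneg _)]
  exact Real.sqrt_le_sqrt h

lemma vnorm_add_le {n : ℕ} (x y : Fin n → ℝ) : vnorm (x + y) ≤ vnorm x + vnorm y := by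
  have h0 : vnorm (x + y) ^ 2 ≤ (vnorm x + vnorm y) ^ 2 := by
    rw [vnorm_sq]
    have : ∑ j, (x + y) j ^ 2 = (∑ j, x j ^ 2) + 2 * (∑ j, x j * y j) + ∑ j, y j ^ 2 := by
      rw [Finset.mul_sum, ← Finset.sum_add_distrib, ← Finset.sum_add_distrib]
      exact Finset.sum_congr rfl fun j _ => by simp [Pi.add_apply]; ring
    rw [this]
    have hd := vnorm_dot_le x y
    have hx := vnorm_sq x; have hy := vnorm_sq y
    nlinarith [vnorm_nonneg x, vnorm_nonneg y]
  have hnn : 0 ≤ vnorm x + vnorm y := add_nonneg (vnorm_nonneg x) (vnorm_nonneg y)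
  exact (abs_le_of_sq_le_sq' h0 hnn).2



lemma le_of_sq_le_sq' {a b : ℝ} (h : a ^ 2 ≤ b ^ 2) (hb : 0 ≤ b) : a ≤ b :=
  (abs_le_of_sq_le_sq' h hb).2

lemma eq_of_sq_eq_sq' {a b : ℝ} (h : a ^ 2 = b ^ 2) (ha : 0 ≤ a) (hb : 0 ≤ b) : a = b :=
  le_antisymm (le_of_sq_le_sq' h.le hb) (le_of_sq_le_sq' h.ge ha)

lemma mulVec_apply' {m n : ℕ} (A : Matrix (Fin m) (Fin n) ℝ) (x : Fin n → ℝ) (i : Fin m) :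
    (A *ᵥ x) i = ∑ j, A i j * x j := rfl

lemma frob_nonneg {m n : ℕ} (A : Matrix (Fin m) (Fin n) ℝ) : 0 ≤ frob A := Real.sqrt_nonneg _

lemma frob_sq {m n : ℕ} (A : Matrix (Fin m) (Fin n) ℝ) :
    frob A ^ 2 = ∑ i, ∑ j, A i j ^ 2 :=
  Real.sq_sqrt (Finset.sum_nonneg fun _ _ => Finset.sum_nonneg fun _ _ => sq_nonneg _)

lemma frob_sq_eq_trace {m n : ℕ} (A : Matrix (Fin m) (Fin n) ℝ) :
    frob A ^ 2 = Matrix.trace (Aᵀ * A) := by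
  rw [frob_sq, Matrix.trace]
  rw [Finset.sum_comm]
  refine Finset.sum_congr rfl fun j _ => ?_
  simp [Matrix.mul_apply, Matrix.diag, sq]

lemma frob_eq_of_sq_eq {m n p q : ℕ} {A : Matrix (Fin m) (Fin n) ℝ}
    {B : Matrix (Fin p) (Fin q) ℝ} (h : frob A ^ 2 = frob B ^ 2) : frob A = frob B := by
  exact eq_of_sq_eq_sq' h (frob_nonneg A) (frob_nonneg B)

lemma frob_le_of_sq_le_sq {m n p q : ℕ} {A : Matrix (Fin m) (Fin n) ℝ}
    {B : Matrix (Fin p) (Fin q) ℝ} (h : frob A ^ 2 ≤ frob B ^ 2) : frob A ≤ frob B :=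
  le_of_sq_le_sq' h (frob_nonneg B)

lemma frob_transpose {m n : ℕ} (A : Matrix (Fin m) (Fin n) ℝ) : frob Aᵀ = frob A := by
  apply frob_eq_of_sq_eq
  rw [frob_sq, frob_sq, Finset.sum_comm]
  simp [Matrix.transpose_apply]

lemma frob_neg {m n : ℕ} (A : Matrix (Fin m) (Fin n) ℝ) : frob (-A) = frob A := by
  apply frob_eq_of_sq_eq
  rw [frob_sq, frob_sq]
  simp

lemma frob_sub_comm {m n : ℕ} (A B : Matrix (Fin m) (Fin n) ℝ) : frob (A - B) = frob (B - A) := by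
  rw [← frob_neg (A - B), neg_sub]

lemma frob_sq_rows {m n : ℕ} (A : Matrix (Fin m) (Fin n) ℝ) :
    frob A ^ 2 = ∑ i, vnorm (fun j => A i j) ^ 2 := by
  rw [frob_sq]
  exact Finset.sum_congr rfl fun i _ => by rw [vnorm_sq]

lemma dot_mulVec_eq {m n : ℕ} (A : Matrix (Fin m) (Fin n) ℝ) (x : Fin n → ℝ) (y : Fin m → ℝ) :
    ∑ i, (A *ᵥ x) i * y i = ∑ j, x j * (Aᵀ *ᵥ y) j := by
  simp only [mulVec_apply', Matrix.transpose_apply, Finset.sum_mul, Finset.mul_sum]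
  rw [Finset.sum_comm]
  exact Finset.sum_congr rfl fun j _ => Finset.sum_congr rfl fun i _ => by ring

lemma vnorm_mulVec_orth {m r : ℕ} {W : Matrix (Fin m) (Fin r) ℝ} (hW : Wᵀ * W = 1)
    (x : Fin r → ℝ) : vnorm (W *ᵥ x) = vnorm x := by
  have h : vnorm (W *ᵥ x) ^ 2 = vnorm x ^ 2 := by
    rw [vnorm_sq, vnorm_sq]
    calc ∑ i, (W *ᵥ x) i ^ 2 = ∑ i, (W *ᵥ x) i * (W *ᵥ x) i := by
          exact Finset.sum_congr rfl fun i _ => by ring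
      _ = ∑ j, x j * (Wᵀ *ᵥ (W *ᵥ x)) j := dot_mulVec_eq _ _ _
      _ = ∑ j, x j * x j := by rw [Matrix.mulVec_mulVec, hW, Matrix.one_mulVec]
      _ = ∑ j, x j ^ 2 := Finset.sum_congr rfl fun j _ => by ring
  exact eq_of_sq_eq_sq' h (vnorm_nonneg _) (vnorm_nonneg _)
lemma vnorm_eq_zero_iff {n : ℕ} {x : Fin n → ℝ} : vnorm x = 0 ↔ x = 0 := by
  unfold vnorm
  rw [Real.sqrt_eq_zero (Finset.sum_nonneg fun _ _ => sq_nonneg _)]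
  constructor
  · intro h
    funext j
    have := (Finset.sum_eq_zero_iff_of_nonneg (fun i _ => sq_nonneg (x i))).mp h j
      (Finset.mem_univ j)
    exact pow_eq_zero_iff (n := 2) (by norm_num) |>.mp this
  · intro h; rw [h]; simp

lemma vnorm_neg {n : ℕ} (x : Fin n → ℝ) : vnorm (-x) = vnorm x := by
  unfold vnorm; congr 1; exact Finset.sum_congr rfl fun j _ => by simp

lemma vnorm_sub_le {n : ℕ} (x y : Fin n → ℝ) : vnorm (x - y) ≤ vnorm x + vnorm y := by
  have := vnorm_add_le x (-y)
  rwa [vnorm_neg y, ← sub_eq_add_neg] at this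

lemma vnorm_le_one {n : ℕ} {x : Fin n → ℝ} (h : (∑ j, x j ^ 2) ≤ 1) : vnorm x ≤ 1 := by
  unfold vnorm
  calc Real.sqrt (∑ j, x j ^ 2) ≤ Real.sqrt 1 := Real.sqrt_le_sqrt h
    _ = 1 := Real.sqrt_one

lemma frob_mulVec_le {m n : ℕ} (A : Matrix (Fin m) (Fin n) ℝ) (x : Fin n → ℝ) :
    vnorm (A *ᵥ x) ≤ frob A * vnorm x := by
  refine le_of_sq_le_sq' ?_ (mul_nonneg (frob_nonneg A) (vnorm_nonneg x))
  rw [mul_pow, vnorm_sq, frob_sq, vnorm_sq]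
  have step : ∀ i : Fin m, (A *ᵥ x) i ^ 2 ≤ (∑ j, A i j ^ 2) * ∑ j, x j ^ 2 := fun i => by
    rw [mulVec_apply']
    exact Finset.sum_mul_sq_le_sq_mul_sq Finset.univ _ _
  calc ∑ i, (A *ᵥ x) i ^ 2 ≤ ∑ i, ((∑ j, A i j ^ 2) * ∑ j, x j ^ 2) :=
        Finset.sum_le_sum fun i _ => step i
    _ = (∑ i, ∑ j, A i j ^ 2) * ∑ j, x j ^ 2 := by rw [Finset.sum_mul]

lemma spec_mem {m n : ℕ} (A : Matrix (Fin m) (Fin n) ℝ) {x : Fin n → ℝ}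
    (hx : (∑ j, x j ^ 2) ≤ 1) :
    vnorm (A *ᵥ x) ∈ {c : ℝ | ∃ x : Fin n → ℝ, (∑ j, x j ^ 2) ≤ 1 ∧
      c = Real.sqrt (∑ i, (∑ j, A i j * x j) ^ 2)} :=
  ⟨x, hx, rfl⟩

lemma spec_bddAbove {m n : ℕ} (A : Matrix (Fin m) (Fin n) ℝ) :
    BddAbove {c : ℝ | ∃ x : Fin n → ℝ, (∑ j, x j ^ 2) ≤ 1 ∧
      c = Real.sqrt (∑ i, (∑ j, A i j * x j) ^ 2)} := by
  refine ⟨frob A, ?_⟩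
  rintro c ⟨x, hx, rfl⟩
  have h : vnorm (A *ᵥ x) ≤ frob A := by
    calc vnorm (A *ᵥ x) ≤ frob A * vnorm x := frob_mulVec_le A x
      _ ≤ frob A * 1 := mul_le_mul_of_nonneg_left (vnorm_le_one hx) (frob_nonneg A)
      _ = frob A := mul_one _
  exact h

lemma vnorm_le_spec {m n : ℕ} (A : Matrix (Fin m) (Fin n) ℝ) {x : Fin n → ℝ}
    (hx : (∑ j, x j ^ 2) ≤ 1) : vnorm (A *ᵥ x) ≤ specNorm A :=
  le_csSup (spec_bddAbove A) (spec_mem A hx)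

lemma spec_nonneg {m n : ℕ} (A : Matrix (Fin m) (Fin n) ℝ) : 0 ≤ specNorm A := by
  have h0 : vnorm (A *ᵥ (0 : Fin n → ℝ)) ≤ specNorm A := vnorm_le_spec A (by simp)
  simpa [Matrix.mulVec_zero, vnorm_zero] using h0

lemma spec_le {m n : ℕ} {A : Matrix (Fin m) (Fin n) ℝ} {c : ℝ} (hc : 0 ≤ c)
    (h : ∀ x : Fin n → ℝ, (∑ j, x j ^ 2) ≤ 1 → vnorm (A *ᵥ x) ≤ c) : specNorm A ≤ c := by
  refine Real.sSup_le ?_ hc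
  rintro c' ⟨x, hx, rfl⟩
  exact h x hx

lemma spec_mulVec_le {m n : ℕ} (A : Matrix (Fin m) (Fin n) ℝ) (x : Fin n → ℝ) :
    vnorm (A *ᵥ x) ≤ specNorm A * vnorm x := by
  rcases eq_or_ne x 0 with rfl | hx
  · simp [Matrix.mulVec_zero, vnorm_zero]
  · have hv : 0 < vnorm x := by
      rcases (vnorm_nonneg x).lt_or_eq with h | h
      · exact h
      · exact absurd (vnorm_eq_zero_iff.mp h.symm) hx
    set u : Fin n → ℝ := (vnorm x)⁻¹ • x with hu
    have hun : vnorm u = 1 := by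
      rw [hu, vnorm_smul, abs_of_pos (inv_pos.mpr hv), inv_mul_cancel₀ hv.ne']
    have husq : (∑ j, u j ^ 2) ≤ 1 := by rw [← vnorm_sq, hun]; norm_num
    have hx' : x = vnorm x • u := by
      rw [hu, smul_smul, mul_inv_cancel₀ hv.ne', one_smul]
    calc vnorm (A *ᵥ x) = vnorm (A *ᵥ (vnorm x • u)) := by rw [← hx']
      _ = vnorm (vnorm x • (A *ᵥ u)) := by rw [Matrix.mulVec_smul]
      _ = vnorm x * vnorm (A *ᵥ u) := by rw [vnorm_smul, abs_of_pos hv]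
      _ ≤ vnorm x * specNorm A := mul_le_mul_of_nonneg_left (vnorm_le_spec A husq) hv.le
      _ = specNorm A * vnorm x := mul_comm _ _

lemma spec_le_frob {m n : ℕ} (A : Matrix (Fin m) (Fin n) ℝ) : specNorm A ≤ frob A := by
  refine spec_le (frob_nonneg A) fun x hx => ?_
  calc vnorm (A *ᵥ x) ≤ frob A * vnorm x := frob_mulVec_le A x
    _ ≤ frob A * 1 := mul_le_mul_of_nonneg_left (vnorm_le_one hx) (frob_nonneg A)
    _ = frob A := mul_one _

lemma spec_transpose_le {m n : ℕ} (A : Matrix (Fin m) (Fin n) ℝ) :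
    specNorm Aᵀ ≤ specNorm A := by
  refine spec_le (spec_nonneg A) fun x hx => ?_
  set w := Aᵀ *ᵥ x with hw
  have key : vnorm w ^ 2 ≤ vnorm x * (specNorm A * vnorm w) := by
    rw [vnorm_sq]
    calc ∑ j, w j ^ 2 = ∑ j, w j * w j := Finset.sum_congr rfl fun j _ => by ring
      _ = ∑ i, (Aᵀ *ᵥ x) i * w i := rfl
      _ = ∑ j, x j * (Aᵀᵀ *ᵥ w) j := dot_mulVec_eq Aᵀ x w
      _ = ∑ j, x j * (A *ᵥ w) j := by rw [Matrix.transpose_transpose]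
      _ ≤ vnorm x * vnorm (A *ᵥ w) := vnorm_dot_le x (A *ᵥ w)
      _ ≤ vnorm x * (specNorm A * vnorm w) :=
          mul_le_mul_of_nonneg_left (spec_mulVec_le A w) (vnorm_nonneg x)
  have hx1 : vnorm x ≤ 1 := vnorm_le_one hx
  nlinarith [key, hx1, vnorm_nonneg w, spec_nonneg A, vnorm_nonneg x,
    mul_nonneg (spec_nonneg A) (vnorm_nonneg w),
    mul_le_mul_of_nonneg_right hx1 (mul_nonneg (spec_nonneg A) (vnorm_nonneg w))]

lemma spec_transpose {m n : ℕ} (A : Matrix (Fin m) (Fin n) ℝ) :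
    specNorm Aᵀ = specNorm A := by
  refine le_antisymm (spec_transpose_le A) ?_
  have := spec_transpose_le Aᵀ
  rwa [Matrix.transpose_transpose] at this

lemma spec_mul_le {m n p : ℕ} (A : Matrix (Fin m) (Fin n) ℝ) (B : Matrix (Fin n) (Fin p) ℝ) :
    specNorm (A * B) ≤ specNorm A * specNorm B := by
  refine spec_le (mul_nonneg (spec_nonneg A) (spec_nonneg B)) fun x hx => ?_
  rw [← Matrix.mulVec_mulVec]
  calc vnorm (A *ᵥ (B *ᵥ x)) ≤ specNorm A * vnorm (B *ᵥ x) := spec_mulVec_le A _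
    _ ≤ specNorm A * (specNorm B * vnorm x) :=
        mul_le_mul_of_nonneg_left (spec_mulVec_le B x) (spec_nonneg A)
    _ ≤ specNorm A * (specNorm B * 1) := by
        refine mul_le_mul_of_nonneg_left ?_ (spec_nonneg A)
        exact mul_le_mul_of_nonneg_left (vnorm_le_one hx) (spec_nonneg B)
    _ = specNorm A * specNorm B := by ring

lemma spec_orth_le_one {m r : ℕ} {W : Matrix (Fin m) (Fin r) ℝ} (hW : Wᵀ * W = 1) :
    specNorm W ≤ 1 := by
  refine spec_le zero_le_one fun x hx => ?_
  rw [vnorm_mulVec_orth hW]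
  exact vnorm_le_one hx

lemma spec_sub_le {m n : ℕ} (A B : Matrix (Fin m) (Fin n) ℝ) :
    specNorm (A - B) ≤ specNorm A + specNorm B := by
  refine spec_le (add_nonneg (spec_nonneg A) (spec_nonneg B)) fun x hx => ?_
  rw [Matrix.sub_mulVec]
  have h1 : vnorm x ≤ 1 := vnorm_le_one hx
  calc vnorm (A *ᵥ x - B *ᵥ x) ≤ vnorm (A *ᵥ x) + vnorm (B *ᵥ x) := vnorm_sub_le _ _
    _ ≤ specNorm A * vnorm x + specNorm B * vnorm x :=
        add_le_add (spec_mulVec_le A x) (spec_mulVec_le B x)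
    _ ≤ specNorm A * 1 + specNorm B * 1 :=
        add_le_add (mul_le_mul_of_nonneg_left h1 (spec_nonneg A))
          (mul_le_mul_of_nonneg_left h1 (spec_nonneg B))
    _ = specNorm A + specNorm B := by ring

lemma row_mul_eq {m n p : ℕ} (A : Matrix (Fin m) (Fin n) ℝ) (B : Matrix (Fin n) (Fin p) ℝ)
    (i : Fin m) : (fun k => (A * B) i k) = Bᵀ *ᵥ (fun j => A i j) := by
  funext k
  rw [mulVec_apply', Matrix.mul_apply]
  exact Finset.sum_congr rfl fun j _ => by rw [Matrix.transpose_apply]; ring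

lemma frob_mul_le_frob_spec {m n p : ℕ} (A : Matrix (Fin m) (Fin n) ℝ)
    (B : Matrix (Fin n) (Fin p) ℝ) : frob (A * B) ≤ frob A * specNorm B := by
  refine le_of_sq_le_sq' ?_ (mul_nonneg (frob_nonneg A) (spec_nonneg B))
  rw [mul_pow, frob_sq_rows (A * B)]
  calc ∑ i, vnorm (fun k => (A * B) i k) ^ 2
      ≤ ∑ i, (specNorm Bᵀ * vnorm (fun j => A i j)) ^ 2 := by
        refine Finset.sum_le_sum fun i _ => ?_
        have h := spec_mulVec_le Bᵀ (fun j => A i j)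
        rw [← row_mul_eq A B i] at h
        exact pow_le_pow_left₀ (vnorm_nonneg _) h 2
    _ = specNorm Bᵀ ^ 2 * ∑ i, vnorm (fun j => A i j) ^ 2 := by
        rw [Finset.mul_sum]; exact Finset.sum_congr rfl fun i _ => by ring
    _ = frob A ^ 2 * specNorm B ^ 2 := by
        rw [spec_transpose, ← frob_sq_rows]; ring

lemma frob_mul_le_spec_frob {m n p : ℕ} (A : Matrix (Fin m) (Fin n) ℝ)
    (B : Matrix (Fin n) (Fin p) ℝ) : frob (A * B) ≤ specNorm A * frob B := by
  have h := frob_mul_le_frob_spec Bᵀ Aᵀ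
  rw [← Matrix.transpose_mul, frob_transpose, frob_transpose, spec_transpose] at h
  linarith

lemma finner_eq_trace {m n : ℕ} (A B : Matrix (Fin m) (Fin n) ℝ) :
    finner A B = Matrix.trace (Aᵀ * B) := by
  rw [finner, Matrix.trace, Finset.sum_comm]
  refine Finset.sum_congr rfl fun j _ => ?_
  simp [Matrix.mul_apply, Matrix.diag]

lemma frob_sq_sub {m n : ℕ} (A B : Matrix (Fin m) (Fin n) ℝ) :
    frob (A - B) ^ 2 = frob A ^ 2 - 2 * finner A B + frob B ^ 2 := by
  rw [frob_sq, frob_sq, frob_sq, finner]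
  have hrow : ∀ i : Fin m, ∑ j, (A - B) i j ^ 2
      = (∑ j, A i j ^ 2) - 2 * (∑ j, A i j * B i j) + ∑ j, B i j ^ 2 := fun i => by
    rw [Finset.mul_sum, ← Finset.sum_sub_distrib, ← Finset.sum_add_distrib]
    exact Finset.sum_congr rfl fun j _ => by simp [Matrix.sub_apply]; ring
  rw [Finset.sum_congr rfl fun i _ => hrow i]
  rw [Finset.mul_sum, ← Finset.sum_sub_distrib, ← Finset.sum_add_distrib]

lemma frob_mul_orth_left {m r n : ℕ} {W : Matrix (Fin m) (Fin r) ℝ} (hW : Wᵀ * W = 1)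
    (Z : Matrix (Fin r) (Fin n) ℝ) : frob (W * Z) = frob Z := by
  apply frob_eq_of_sq_eq
  rw [frob_sq_eq_trace, frob_sq_eq_trace, Matrix.transpose_mul, Matrix.mul_assoc,
    ← Matrix.mul_assoc Wᵀ W Z, hW, Matrix.one_mul]

lemma frob_sq_proj_split {m r n : ℕ} {W : Matrix (Fin m) (Fin r) ℝ} (hW : Wᵀ * W = 1)
    (Z : Matrix (Fin m) (Fin n) ℝ) :
    frob (Wᵀ * Z) ^ 2 + frob (Z - W * (Wᵀ * Z)) ^ 2 = frob Z ^ 2 := by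
  have hf : finner Z (W * (Wᵀ * Z)) = frob (Wᵀ * Z) ^ 2 := by
    rw [finner_eq_trace, frob_sq_eq_trace, Matrix.transpose_mul, Matrix.mul_assoc,
      Matrix.transpose_transpose]
  have hiso : frob (W * (Wᵀ * Z)) = frob (Wᵀ * Z) := frob_mul_orth_left hW _
  rw [frob_sq_sub, hf, hiso]
  ring

lemma frob_projL_le {m r n : ℕ} {W : Matrix (Fin m) (Fin r) ℝ} (hW : Wᵀ * W = 1)
    (Z : Matrix (Fin m) (Fin n) ℝ) : frob (Wᵀ * Z) ≤ frob Z := by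
  refine le_of_sq_le_sq' ?_ (frob_nonneg Z)
  have := frob_sq_proj_split hW Z
  nlinarith [sq_nonneg (frob (Z - W * (Wᵀ * Z)))]

lemma frob_sub_projL_le {m r n : ℕ} {W : Matrix (Fin m) (Fin r) ℝ} (hW : Wᵀ * W = 1)
    (Z : Matrix (Fin m) (Fin n) ℝ) : frob (Z - W * (Wᵀ * Z)) ≤ frob Z := by
  refine le_of_sq_le_sq' ?_ (frob_nonneg Z)
  have := frob_sq_proj_split hW Z
  nlinarith [sq_nonneg (frob (Wᵀ * Z))]

lemma frob_projR_le {m r n : ℕ} {W : Matrix (Fin n) (Fin r) ℝ} (hW : Wᵀ * W = 1)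
    (Z : Matrix (Fin m) (Fin n) ℝ) : frob (Z * W) ≤ frob Z := by
  have h := frob_projL_le hW Zᵀ
  calc frob (Z * W) = frob ((Z * W)ᵀ) := (frob_transpose _).symm
    _ = frob (Wᵀ * Zᵀ) := by rw [Matrix.transpose_mul]
    _ ≤ frob Zᵀ := h
    _ = frob Z := frob_transpose Z

lemma frob_sub_projR_le {m r n : ℕ} {W : Matrix (Fin n) (Fin r) ℝ} (hW : Wᵀ * W = 1)
    (Z : Matrix (Fin m) (Fin n) ℝ) : frob (Z - (Z * W) * Wᵀ) ≤ frob Z := by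
  have h := frob_sub_projL_le hW Zᵀ
  have he : (Z - (Z * W) * Wᵀ)ᵀ = Zᵀ - W * (Wᵀ * Zᵀ) := by
    rw [Matrix.transpose_sub, Matrix.transpose_mul, Matrix.transpose_mul,
      Matrix.transpose_transpose]
  calc frob (Z - (Z * W) * Wᵀ) = frob ((Z - (Z * W) * Wᵀ)ᵀ) := (frob_transpose _).symm
    _ = frob (Zᵀ - W * (Wᵀ * Zᵀ)) := by rw [he]
    _ ≤ frob Zᵀ := h
    _ = frob Z := frob_transpose Z

lemma isUnit_of_mulVec_lb {r : ℕ} {F : Matrix (Fin r) (Fin r) ℝ} {c : ℝ} (hc : 0 < c)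
    (h : ∀ x, c * vnorm x ≤ vnorm (F *ᵥ x)) : IsUnit F := by
  rw [← Matrix.mulVec_injective_iff_isUnit]
  intro a b hab
  have h0 : F *ᵥ (a - b) = 0 := by
    rw [Matrix.mulVec_sub, hab, sub_self]
  have := h (a - b)
  rw [h0, vnorm_zero] at this
  have hz : vnorm (a - b) = 0 :=
    le_antisymm (nonpos_of_mul_nonpos_right ?_ hc |>.trans le_rfl) (vnorm_nonneg _)
  · have := vnorm_eq_zero_iff.mp hz
    exact sub_eq_zero.mp this
  · nlinarith [vnorm_nonneg (a - b)]

lemma spec_inv_le {r : ℕ} {F : Matrix (Fin r) (Fin r) ℝ} {c : ℝ} (hc : 0 < c)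
    (h : ∀ x, c * vnorm x ≤ vnorm (F *ᵥ x)) (hinv : F * F⁻¹ = 1) :
    specNorm F⁻¹ ≤ c⁻¹ := by
  refine spec_le (inv_nonneg.mpr hc.le) fun x hx => ?_
  have hy : F *ᵥ (F⁻¹ *ᵥ x) = x := by
    rw [Matrix.mulVec_mulVec, hinv, Matrix.one_mulVec]
  have h1 := h (F⁻¹ *ᵥ x)
  rw [hy] at h1
  have h2 : vnorm x ≤ 1 := vnorm_le_one hx
  rw [← mul_le_mul_iff_right₀ hc, mul_inv_cancel₀ hc.ne']
  linarith


set_option maxHeartbeats 1000000 in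
/-- **Proposition 1, refined form.** -/
theorem stmt4 (m n r : ℕ) (hm : 1 ≤ m) (hn : 1 ≤ n) (hr : 1 ≤ r)
    (μ βT Smax Smin : ℝ) (hβT : 0 < βT)
    (M : Matrix (Fin m) (Fin n) ℝ)
    (Uh : Matrix (Fin m) (Fin r) ℝ) (Vh : Matrix (Fin n) (Fin r) ℝ)
    (σ : Fin r → ℝ)
    (hUorth : Uhᵀ * Uh = 1) (hVorth : Vhᵀ * Vh = 1)
    (hσpos : ∀ k, 0 < σ k)
    (hσmono : ∀ k l : Fin r, k ≤ l → σ l ≤ σ k)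
    (hM : M = Uh * Matrix.diagonal σ * Vhᵀ)
    (hSmax : (∀ k, σ k ≤ Smax) ∧ ∃ k, σ k = Smax)
    (hSmin : (∀ k, Smin ≤ σ k) ∧ ∃ k, σ k = Smin)
    (hincU : ∀ i, ∑ k, Uh i k ^ 2 ≤ μ * r / m)
    (hincV : ∀ j, ∑ k, Vh j k ^ 2 ≤ μ * r / n)
    (X : Matrix (Fin m) (Fin r) ℝ) (Y : Matrix (Fin n) (Fin r) ℝ)
    (hd : frob (M - X * Yᵀ) ≤ Smin / (10 * r))
    (hX : frob X ≤ βT) (hY : frob Y ≤ βT) :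
    ∃ (U : Matrix (Fin m) (Fin r) ℝ) (V : Matrix (Fin n) (Fin r) ℝ),
      U * Vᵀ = M ∧
      frob U ≤ frob X ∧
      specNorm U ≤ specNorm X ∧
      frob (U - X) ≤ 5 / (4 * Smin) * max (specNorm X) (specNorm Y) * frob (M - X * Yᵀ) ∧
      frob (V - Y) ≤ 2 / Smin * max (specNorm X) (specNorm Y) * frob (M - X * Yᵀ) ∧
      (∀ i, rowNorm U i ^ 2 ≤ r * μ / m * βT ^ 2) ∧
      (∀ j, rowNorm V j ^ 2 ≤ 3 * r * μ / (2 * n) * βT ^ 2) := by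
  -- basic scalars
  have hs : 0 < Smin := by obtain ⟨k, hk⟩ := hSmin.2; rw [← hk]; exact hσpos k
  set d := frob (M - X * Yᵀ) with hd_def
  clear_value d
  have hd0 : 0 ≤ d := by rw [hd_def]; exact frob_nonneg _
  have hr1 : (1 : ℝ) ≤ (r : ℝ) := by exact_mod_cast hr
  have hd10 : d ≤ Smin / 10 := by
    refine hd.trans ?_
    apply div_le_div_of_nonneg_left hs.le (by norm_num)
    nlinarith
  have hsd : 0 < Smin - d := by linarith
  have hginv : (Smin - d)⁻¹ ≤ 10 / (9 * Smin) := by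
    have h1 : (9 / 10) * Smin ≤ Smin - d := by linarith
    have h2 : ((9 / 10) * Smin)⁻¹ = 10 / (9 * Smin) := by
      field_simp
    calc (Smin - d)⁻¹ ≤ ((9 / 10) * Smin)⁻¹ := inv_anti₀ (by positivity) h1
      _ = 10 / (9 * Smin) := h2
  have hg0 : 0 ≤ (Smin - d)⁻¹ := inv_nonneg.mpr hsd.le
  have hgd : (Smin - d)⁻¹ * d ≤ 1 / 9 := by
    calc (Smin - d)⁻¹ * d ≤ (10 / (9 * Smin)) * (Smin / 10) :=
          mul_le_mul hginv hd10 hd0 (by positivity)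
      _ = 1 / 9 := by field_simp
  -- matrices
  set Sd := Matrix.diagonal σ with hSd
  clear_value Sd
  set Zd := X * Yᵀ - M with hZd
  clear_value Zd
  have hZdfrob : frob Zd = d := by rw [hZd, hd_def]; exact frob_sub_comm _ _
  set E := Uhᵀ * Zd * Vh with hE
  clear_value E
  set F := Sd + E with hF
  clear_value F
  set A := Uhᵀ * X with hA
  clear_value A
  set B := Vhᵀ * Y with hB
  clear_value B
  have hBt : Bᵀ = Yᵀ * Vh := by
    rw [hB, Matrix.transpose_mul, Matrix.transpose_transpose]
  -- applied orthonormality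
  have hU1 : ∀ {p : ℕ} (Z : Matrix (Fin r) (Fin p) ℝ), Uhᵀ * (Uh * Z) = Z := fun Z => by
    rw [← Matrix.mul_assoc, hUorth, Matrix.one_mul]
  have hV1 : ∀ {p : ℕ} (Z : Matrix (Fin r) (Fin p) ℝ), Vhᵀ * (Vh * Z) = Z := fun Z => by
    rw [← Matrix.mul_assoc, hVorth, Matrix.one_mul]
  have hUtM : Uhᵀ * M = Sd * Vhᵀ := by
    rw [hM, Matrix.mul_assoc Uh, ← Matrix.mul_assoc Uhᵀ, hUorth, Matrix.one_mul]
  have hMVh : M * Vh = Uh * Sd := by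
    rw [hM, Matrix.mul_assoc (Uh * Sd), hVorth, Matrix.mul_one]
  have hUhM : Uh * (Sd * Vhᵀ) = M := by
    rw [hM, Matrix.mul_assoc]
  -- frob E ≤ d
  have hEfrob : frob E ≤ d := by
    rw [hE]
    calc frob (Uhᵀ * Zd * Vh) ≤ frob (Uhᵀ * Zd) := frob_projR_le hVorth _
      _ ≤ frob Zd := frob_projL_le hUorth _
      _ = d := hZdfrob
  have hEspec : specNorm E ≤ d := (spec_le_frob E).trans hEfrob
  -- F is invertible with controlled inverse
  have hFlb : ∀ x : Fin r → ℝ, (Smin - d) * vnorm x ≤ vnorm (F *ᵥ x) := by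
    intro x
    have hSlb : Smin * vnorm x ≤ vnorm (Sd *ᵥ x) := by
      refine le_of_sq_le_sq' ?_ (vnorm_nonneg _)
      rw [mul_pow, vnorm_sq, vnorm_sq, Finset.mul_sum]
      refine Finset.sum_le_sum fun k _ => ?_
      rw [hSd, Matrix.mulVec_diagonal]
      have h1 := (hSmin.1 k)
      nlinarith [sq_nonneg (x k), hσpos k, mul_self_le_mul_self hs.le h1]
    have hEub : vnorm (E *ᵥ x) ≤ d * vnorm x := by
      calc vnorm (E *ᵥ x) ≤ frob E * vnorm x := frob_mulVec_le E x
        _ ≤ d * vnorm x := mul_le_mul_of_nonneg_right hEfrob (vnorm_nonneg x)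
    have hsplit : Sd *ᵥ x = F *ᵥ x - E *ᵥ x := by
      rw [hF, Matrix.add_mulVec]; abel
    have htri : vnorm (Sd *ᵥ x) ≤ vnorm (F *ᵥ x) + vnorm (E *ᵥ x) := by
      rw [hsplit]; exact vnorm_sub_le _ _
    nlinarith [vnorm_nonneg x]
  have hFu : IsUnit F := isUnit_of_mulVec_lb hsd hFlb
  have hFdet : IsUnit F.det := (Matrix.isUnit_iff_isUnit_det F).mp hFu
  have hFinv : F * F⁻¹ = 1 := Matrix.mul_nonsing_inv F hFdet
  have hFinv' : F⁻¹ * F = 1 := Matrix.nonsing_inv_mul F hFdet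
  have hFispec : specNorm F⁻¹ ≤ (Smin - d)⁻¹ := spec_inv_le hsd hFlb hFinv
  -- the correction matrix C
  set C := Bᵀ * F⁻¹ with hC
  clear_value C
  have hABF : A * Bᵀ = F := by
    rw [hA, hBt, hF, hE, Matrix.mul_assoc Uhᵀ X (Yᵀ * Vh), ← Matrix.mul_assoc X Yᵀ Vh,
      ← Matrix.mul_assoc Uhᵀ (X * Yᵀ) Vh, hZd, Matrix.mul_sub, Matrix.sub_mul,
      Matrix.mul_assoc Uhᵀ M Vh, hMVh, ← Matrix.mul_assoc Uhᵀ Uh Sd, hUorth, Matrix.one_mul]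
    abel
  have hAC : A * C = 1 := by
    rw [hC, ← Matrix.mul_assoc, hABF, hFinv]
  have hCA : C * A = 1 := mul_eq_one_comm.mp hAC
  have hCS : C * Sd = Bᵀ - C * E := by
    have h1 : C * F = Bᵀ := by rw [hC, Matrix.mul_assoc, hFinv', Matrix.mul_one]
    have h2 : C * F = C * Sd + C * E := by rw [hF, Matrix.mul_add]
    rw [← h1, h2]; abel
  have hSCt : Sd * Cᵀ = B - Eᵀ * Cᵀ := by
    have h1 : (C * Sd)ᵀ = Sd * Cᵀ := by
      rw [Matrix.transpose_mul, hSd, Matrix.diagonal_transpose]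
    have h2 : (Bᵀ - C * E)ᵀ = B - Eᵀ * Cᵀ := by
      rw [Matrix.transpose_sub (M := Bᵀ) (N := C * E), Matrix.transpose_mul C E,
        Matrix.transpose_transpose]
    rw [← h1, hCS, h2]
  -- spectral bounds
  have hUht : specNorm Uhᵀ ≤ 1 := by
    rw [spec_transpose]; exact spec_orth_le_one hUorth
  have hVh1 : specNorm Vh ≤ 1 := spec_orth_le_one hVorth
  have hAspec : specNorm A ≤ specNorm X := by
    rw [hA]
    calc specNorm (Uhᵀ * X) ≤ specNorm Uhᵀ * specNorm X := spec_mul_le _ _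
      _ ≤ 1 * specNorm X := mul_le_mul_of_nonneg_right hUht (spec_nonneg X)
      _ = specNorm X := one_mul _
  have hBtspec : specNorm Bᵀ ≤ specNorm Y := by
    rw [hBt]
    calc specNorm (Yᵀ * Vh) ≤ specNorm Yᵀ * specNorm Vh := spec_mul_le _ _
      _ ≤ specNorm Yᵀ * 1 := mul_le_mul_of_nonneg_left hVh1 (spec_nonneg Yᵀ)
      _ = specNorm Y := by rw [mul_one, spec_transpose]
  have hCspec : specNorm C ≤ specNorm Y * (Smin - d)⁻¹ := by
    rw [hC]
    calc specNorm (Bᵀ * F⁻¹) ≤ specNorm Bᵀ * specNorm F⁻¹ := spec_mul_le _ _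
      _ ≤ specNorm Y * (Smin - d)⁻¹ :=
        mul_le_mul hBtspec hFispec (spec_nonneg _) (spec_nonneg Y)
  -- the witnesses
  refine ⟨Uh * A, Vh * (Sd * Cᵀ), ?_, ?_, ?_, ?_, ?_, ?_, ?_⟩
  · -- U * Vᵀ = M
    have hVt : (Vh * (Sd * Cᵀ))ᵀ = (C * Sd) * Vhᵀ := by
      rw [Matrix.transpose_mul, Matrix.transpose_mul, Matrix.transpose_transpose, hSd,
        Matrix.diagonal_transpose]
    rw [hVt, Matrix.mul_assoc Uh A ((C * Sd) * Vhᵀ), ← Matrix.mul_assoc A (C * Sd) Vhᵀ,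
      ← Matrix.mul_assoc A C Sd, hAC, Matrix.one_mul, hUhM]
  · -- frob U ≤ frob X
    calc frob (Uh * A) = frob A := frob_mul_orth_left hUorth A
      _ ≤ frob X := by rw [hA]; exact frob_projL_le hUorth X
  · -- specNorm U ≤ specNorm X
    refine spec_le (spec_nonneg X) fun x hx => ?_
    have h1 : (Uh * A) *ᵥ x = Uh *ᵥ (A *ᵥ x) := (Matrix.mulVec_mulVec _ _ _).symm
    have h2 : A *ᵥ x = Uhᵀ *ᵥ (X *ᵥ x) := by rw [hA, Matrix.mulVec_mulVec]
    rw [h1, vnorm_mulVec_orth hUorth, h2]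
    calc vnorm (Uhᵀ *ᵥ (X *ᵥ x)) ≤ specNorm Uhᵀ * vnorm (X *ᵥ x) := spec_mulVec_le _ _
      _ ≤ 1 * vnorm (X *ᵥ x) := mul_le_mul_of_nonneg_right hUht (vnorm_nonneg _)
      _ = vnorm (X *ᵥ x) := one_mul _
      _ ≤ specNorm X * vnorm x := spec_mulVec_le _ _
      _ ≤ specNorm X * 1 := mul_le_mul_of_nonneg_left (vnorm_le_one hx) (spec_nonneg X)
      _ = specNorm X := mul_one _
  · -- frob (U - X) bound
    set W1 := Vh * (F⁻¹ * A) with hW1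
    clear_value W1
    have hYW1 : Yᵀ * W1 = 1 := by
      rw [hW1, ← Matrix.mul_assoc, ← hBt, ← Matrix.mul_assoc, ← hC, hCA]
    have hXid : X - Uh * (Uhᵀ * X) = (Zd - Uh * (Uhᵀ * Zd)) * W1 := by
      have e1 : Zd * W1 = X - M * W1 := by
        rw [hZd, Matrix.sub_mul, Matrix.mul_assoc, hYW1, Matrix.mul_one]
      have e2 : Uh * (Uhᵀ * (Zd * W1)) = Uh * (Uhᵀ * X) - M * W1 := by
        rw [e1, Matrix.mul_sub, Matrix.mul_sub, ← Matrix.mul_assoc Uhᵀ M W1, hUtM,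
          ← Matrix.mul_assoc Uh (Sd * Vhᵀ) W1, hUhM]
      rw [Matrix.sub_mul, Matrix.mul_assoc Uh (Uhᵀ * Zd) W1, Matrix.mul_assoc Uhᵀ Zd W1, e2, e1]
      abel
    have hfrob1 : frob ((Uh * A) - X) = frob ((Zd - Uh * (Uhᵀ * Zd)) * W1) := by
      rw [frob_sub_comm, hA, hXid]
    have hW1spec : specNorm W1 ≤ (Smin - d)⁻¹ * specNorm X := by
      rw [hW1]
      calc specNorm (Vh * (F⁻¹ * A)) ≤ specNorm Vh * specNorm (F⁻¹ * A) := spec_mul_le _ _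
        _ ≤ 1 * specNorm (F⁻¹ * A) := mul_le_mul_of_nonneg_right hVh1 (spec_nonneg _)
        _ = specNorm (F⁻¹ * A) := one_mul _
        _ ≤ specNorm F⁻¹ * specNorm A := spec_mul_le _ _
        _ ≤ (Smin - d)⁻¹ * specNorm X :=
          mul_le_mul hFispec hAspec (spec_nonneg _) hg0
    have hmain : frob ((Uh * A) - X) ≤ d * ((Smin - d)⁻¹ * specNorm X) := by
      rw [hfrob1]
      calc frob ((Zd - Uh * (Uhᵀ * Zd)) * W1)
          ≤ frob (Zd - Uh * (Uhᵀ * Zd)) * specNorm W1 := frob_mul_le_frob_spec _ _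
        _ ≤ frob Zd * specNorm W1 :=
            mul_le_mul_of_nonneg_right (frob_sub_projL_le hUorth Zd) (spec_nonneg _)
        _ = d * specNorm W1 := by rw [hZdfrob]
        _ ≤ d * ((Smin - d)⁻¹ * specNorm X) := mul_le_mul_of_nonneg_left hW1spec hd0
    refine hmain.trans ?_
    have hXD : specNorm X ≤ max (specNorm X) (specNorm Y) := le_max_left _ _
    have hD0 : 0 ≤ max (specNorm X) (specNorm Y) := le_trans (spec_nonneg X) hXD
    have h109 : (0:ℝ) ≤ 10 / (9 * Smin) := div_nonneg (by norm_num) (by nlinarith)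
    have step1 : (Smin - d)⁻¹ * specNorm X ≤ (10 / (9 * Smin)) * max (specNorm X) (specNorm Y) :=
      mul_le_mul hginv hXD (spec_nonneg X) h109
    have hcoef : 10 / (9 * Smin) ≤ 5 / (4 * Smin) := by
      rw [div_le_div_iff₀ (by positivity) (by positivity)]; nlinarith
    calc d * ((Smin - d)⁻¹ * specNorm X)
        ≤ d * ((10 / (9 * Smin)) * max (specNorm X) (specNorm Y)) :=
          mul_le_mul_of_nonneg_left step1 hd0
      _ ≤ d * ((5 / (4 * Smin)) * max (specNorm X) (specNorm Y)) := by
          refine mul_le_mul_of_nonneg_left ?_ hd0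
          exact mul_le_mul_of_nonneg_right hcoef hD0
      _ = 5 / (4 * Smin) * max (specNorm X) (specNorm Y) * d := by ring
  · -- frob (V - Y) bound
    have hVmY : Vh * (Sd * Cᵀ) - Y = (Vh * B - Y) - Vh * (Eᵀ * Cᵀ) := by
      rw [hSCt, Matrix.mul_sub]; abel
    have hcross : finner (Vh * B - Y) (Vh * (Eᵀ * Cᵀ)) = 0 := by
      rw [finner_eq_trace]
      have hzero : (Vh * B - Y)ᵀ * (Vh * (Eᵀ * Cᵀ)) = 0 := by
        rw [Matrix.transpose_sub, Matrix.transpose_mul, Matrix.sub_mul,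
          Matrix.mul_assoc Bᵀ Vhᵀ (Vh * (Eᵀ * Cᵀ)), hV1, ← Matrix.mul_assoc Yᵀ Vh (Eᵀ * Cᵀ),
          ← hBt]
        abel
      rw [hzero, Matrix.trace_zero]
    have hsq : frob (Vh * (Sd * Cᵀ) - Y) ^ 2
        = frob (Vh * B - Y) ^ 2 + frob (Vh * (Eᵀ * Cᵀ)) ^ 2 := by
      rw [hVmY, frob_sq_sub, hcross]; ring
    -- t2 bound
    have hsYg : specNorm C ≤ specNorm Y * (Smin - d)⁻¹ := hCspec
    have ht2 : frob (Vh * (Eᵀ * Cᵀ)) ≤ specNorm Y * (Smin - d)⁻¹ * d := by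
      have he : Eᵀ * Cᵀ = (C * E)ᵀ := by rw [Matrix.transpose_mul C E]
      calc frob (Vh * (Eᵀ * Cᵀ)) = frob (Eᵀ * Cᵀ) := frob_mul_orth_left hVorth _
        _ = frob (C * E) := by rw [he, frob_transpose]
        _ ≤ specNorm C * frob E := frob_mul_le_spec_frob _ _
        _ ≤ specNorm Y * (Smin - d)⁻¹ * d :=
            mul_le_mul hsYg hEfrob (frob_nonneg E) (mul_nonneg (spec_nonneg Y) hg0)
    -- t1 bound
    have hCUspec : specNorm (C * Uhᵀ) ≤ specNorm Y * (Smin - d)⁻¹ := by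
      calc specNorm (C * Uhᵀ) ≤ specNorm C * specNorm Uhᵀ := spec_mul_le _ _
        _ ≤ specNorm C * 1 := mul_le_mul_of_nonneg_left hUht (spec_nonneg C)
        _ = specNorm C := mul_one _
        _ ≤ specNorm Y * (Smin - d)⁻¹ := hCspec
    have hYid : Yᵀ - (Yᵀ * Vh) * Vhᵀ = (C * Uhᵀ) * (Zd - (Zd * Vh) * Vhᵀ) := by
      have e0 : (C * Uhᵀ) * Zd = Yᵀ - (C * Sd) * Vhᵀ := by
        rw [hZd, Matrix.mul_sub, Matrix.mul_assoc C Uhᵀ M, hUtM, ← Matrix.mul_assoc C Sd Vhᵀ,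
          Matrix.mul_assoc C Uhᵀ (X * Yᵀ), ← Matrix.mul_assoc Uhᵀ X Yᵀ, ← hA,
          ← Matrix.mul_assoc C A Yᵀ, hCA, Matrix.one_mul]
      have e1 : (C * Uhᵀ) * ((Zd * Vh) * Vhᵀ) = ((Yᵀ * Vh) * Vhᵀ) - (C * Sd) * Vhᵀ := by
        have e2 : (C * Uhᵀ) * ((Zd * Vh) * Vhᵀ) = (((C * Uhᵀ) * Zd) * Vh) * Vhᵀ := by
          rw [← Matrix.mul_assoc (C * Uhᵀ) (Zd * Vh) Vhᵀ, ← Matrix.mul_assoc (C * Uhᵀ) Zd Vh]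
        rw [e2, e0, Matrix.sub_mul, Matrix.sub_mul, Matrix.mul_assoc (C * Sd) Vhᵀ Vh, hVorth,
          Matrix.mul_one]
      rw [Matrix.mul_sub, e0, e1]
      try abel
    have ht1 : frob (Vh * B - Y) ≤ specNorm Y * (Smin - d)⁻¹ * d := by
      have htr : (Y - Vh * B)ᵀ = Yᵀ - (Yᵀ * Vh) * Vhᵀ := by
        rw [Matrix.transpose_sub, Matrix.transpose_mul Vh B, hBt]
      calc frob (Vh * B - Y) = frob (Y - Vh * B) := frob_sub_comm _ _
        _ = frob ((Y - Vh * B)ᵀ) := (frob_transpose _).symm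
        _ = frob ((C * Uhᵀ) * (Zd - (Zd * Vh) * Vhᵀ)) := by rw [htr, hYid]
        _ ≤ specNorm (C * Uhᵀ) * frob (Zd - (Zd * Vh) * Vhᵀ) := frob_mul_le_spec_frob _ _
        _ ≤ (specNorm Y * (Smin - d)⁻¹) * d := by
            refine mul_le_mul hCUspec ?_ (frob_nonneg _) (mul_nonneg (spec_nonneg Y) hg0)
            rw [← hZdfrob]
            exact frob_sub_projR_le hVorth Zd
    -- combine
    have hYD : specNorm Y ≤ max (specNorm X) (specNorm Y) := le_max_right _ _
    have hD0 : 0 ≤ max (specNorm X) (specNorm Y) := le_trans (spec_nonneg Y) hYD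
    set K := specNorm Y * (Smin - d)⁻¹ * d with hK
    clear_value K
    have hK0 : 0 ≤ K := by rw [hK]; exact mul_nonneg (mul_nonneg (spec_nonneg Y) hg0) hd0
    have hKle : K ≤ max (specNorm X) (specNorm Y) * (10 / (9 * Smin)) * d := by
      rw [hK]
      refine mul_le_mul_of_nonneg_right ?_ hd0
      exact mul_le_mul hYD hginv hg0 hD0
    refine le_of_sq_le_sq' ?_
      (mul_nonneg (mul_nonneg (div_nonneg (by norm_num) hs.le) hD0) hd0)
    have hfin : frob (Vh * (Sd * Cᵀ) - Y) ^ 2 ≤ 2 * K ^ 2 := by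
      rw [hsq]
      have q1 : frob (Vh * B - Y) ^ 2 ≤ K ^ 2 := pow_le_pow_left₀ (frob_nonneg _) ht1 2
      have q2 : frob (Vh * (Eᵀ * Cᵀ)) ^ 2 ≤ K ^ 2 := pow_le_pow_left₀ (frob_nonneg _) ht2 2
      linarith only [q1, q2]
    refine hfin.trans ?_
    have hs9 : (0:ℝ) ≤ 9 * Smin := by linarith only [hs]
    have hK9 : K * (9 * Smin) ≤ 10 * (max (specNorm X) (specNorm Y) * d) := by
      calc K * (9 * Smin)
          ≤ (max (specNorm X) (specNorm Y) * (10 / (9 * Smin)) * d) * (9 * Smin) :=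
            mul_le_mul_of_nonneg_right hKle hs9
        _ = 10 * (max (specNorm X) (specNorm Y) * d) := by
            field_simp
    have hK9sq : (K * (9 * Smin)) ^ 2 ≤ (10 * (max (specNorm X) (specNorm Y) * d)) ^ 2 :=
      pow_le_pow_left₀ (mul_nonneg hK0 hs9) hK9 2
    have hs2 : (0:ℝ) < Smin ^ 2 := by nlinarith only [hs]
    have hrw : (2 / Smin * max (specNorm X) (specNorm Y) * d) ^ 2
        = (2 * max (specNorm X) (specNorm Y) * d) ^ 2 / Smin ^ 2 := by
      rw [div_mul_eq_mul_div, div_mul_eq_mul_div, div_pow]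
    rw [hrw, le_div_iff₀ hs2]
    nlinarith only [hK9sq, sq_nonneg (max (specNorm X) (specNorm Y) * d)]
  · -- rowNorm U bound
    intro i
    have hrow : rowNorm (Uh * A) i = vnorm (Aᵀ *ᵥ (fun l => Uh i l)) := by
      rw [rowNorm, ← row_mul_eq Uh A i]; rfl
    have hAt : specNorm Aᵀ ≤ βT := by
      rw [spec_transpose]
      exact hAspec.trans ((spec_le_frob X).trans hX)
    have hin : vnorm (fun l => Uh i l) ^ 2 ≤ μ * r / m := by
      rw [vnorm_sq]; exact hincU i
    have hin0 : 0 ≤ μ * r / m :=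
      le_trans (Finset.sum_nonneg fun k _ => sq_nonneg _) (hincU i)
    have h1 : rowNorm (Uh * A) i ≤ specNorm Aᵀ * vnorm (fun l => Uh i l) := by
      rw [hrow]; exact spec_mulVec_le _ _
    have h2 : rowNorm (Uh * A) i ^ 2 ≤ (specNorm Aᵀ * vnorm (fun l => Uh i l)) ^ 2 := by
      apply pow_le_pow_left₀ ?_ h1
      rw [rowNorm]; exact Real.sqrt_nonneg _
    calc rowNorm (Uh * A) i ^ 2 ≤ (specNorm Aᵀ * vnorm (fun l => Uh i l)) ^ 2 := h2
      _ = specNorm Aᵀ ^ 2 * vnorm (fun l => Uh i l) ^ 2 := by ring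
      _ ≤ βT ^ 2 * (μ * r / m) := by
          refine mul_le_mul ?_ hin (sq_nonneg _) (sq_nonneg βT)
          exact pow_le_pow_left₀ (spec_nonneg _) hAt 2
      _ = r * μ / m * βT ^ 2 := by ring
  · -- rowNorm V bound
    intro j
    have hrow : rowNorm (Vh * (Sd * Cᵀ)) j = vnorm ((C * Sd) *ᵥ (fun l => Vh j l)) := by
      have ht : (Sd * Cᵀ)ᵀ = C * Sd := by
        rw [Matrix.transpose_mul, Matrix.transpose_transpose, hSd, Matrix.diagonal_transpose]
      rw [rowNorm, ← ht, ← row_mul_eq Vh (Sd * Cᵀ) j]; rfl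
    have hCE : specNorm (C * E) ≤ βT * (1 / 9) := by
      calc specNorm (C * E) ≤ specNorm C * specNorm E := spec_mul_le _ _
        _ ≤ (specNorm Y * (Smin - d)⁻¹) * d :=
            mul_le_mul hCspec hEspec (spec_nonneg E) (mul_nonneg (spec_nonneg Y) hg0)
        _ = specNorm Y * ((Smin - d)⁻¹ * d) := by ring
        _ ≤ βT * (1 / 9) := by
            refine mul_le_mul ((spec_le_frob Y).trans hY) hgd (mul_nonneg hg0 hd0) hβT.le
    have hCSspec : specNorm (C * Sd) ≤ (10 / 9) * βT := by
      rw [hCS]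
      calc specNorm (Bᵀ - C * E) ≤ specNorm Bᵀ + specNorm (C * E) := spec_sub_le _ _
        _ ≤ βT + βT * (1 / 9) := by
            refine add_le_add (hBtspec.trans ((spec_le_frob Y).trans hY)) hCE
        _ = (10 / 9) * βT := by ring
    have hin : vnorm (fun l => Vh j l) ^ 2 ≤ μ * r / n := by
      rw [vnorm_sq]; exact hincV j
    have hin0 : 0 ≤ μ * r / n :=
      le_trans (Finset.sum_nonneg fun k _ => sq_nonneg _) (hincV j)
    have h1 : rowNorm (Vh * (Sd * Cᵀ)) j ≤ specNorm (C * Sd) * vnorm (fun l => Vh j l) := by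
      rw [hrow]; exact spec_mulVec_le _ _
    have h2 : rowNorm (Vh * (Sd * Cᵀ)) j ^ 2
        ≤ (specNorm (C * Sd) * vnorm (fun l => Vh j l)) ^ 2 := by
      apply pow_le_pow_left₀ ?_ h1
      rw [rowNorm]; exact Real.sqrt_nonneg _
    have hn0 : (0 : ℝ) < n := by exact_mod_cast hn
    calc rowNorm (Vh * (Sd * Cᵀ)) j ^ 2
        ≤ (specNorm (C * Sd) * vnorm (fun l => Vh j l)) ^ 2 := h2
      _ = specNorm (C * Sd) ^ 2 * vnorm (fun l => Vh j l) ^ 2 := by ring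
      _ ≤ ((10 / 9) * βT) ^ 2 * (μ * r / n) := by
          refine mul_le_mul ?_ hin (sq_nonneg _) (by positivity)
          exact pow_le_pow_left₀ (spec_nonneg _) hCSspec 2
      _ ≤ 3 * r * μ / (2 * n) * βT ^ 2 := by
          have he : 3 * (r : ℝ) * μ / (2 * n) * βT ^ 2 = (3 / 2) * (μ * r / n) * βT ^ 2 := by
            field_simp
          rw [he]
          nlinarith only [sq_nonneg βT, hin0, hβT]

end
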